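/- Let ε > 0 and define φ : ℝ → ℝ by φ(u) = log(ε + |u|) − |u|/ε. Then φ is continuously differentiable on all of ℝ (including at u = 0), with derivative φ′(u) = sign(u)·(1/(ε + |u|) − 1/ε), where sign(0) = 0. In particular φ′(0) = 0, even though u ↦ log(ε + |u|) and u ↦ |u|/ε are individually non-differentiable at 0. -/

import Mathlib

/-- for `ε > 0`, the function `φ(u) = log(ε + |u|) − |u|/ε` is
continuously differentiable on all of `ℝ` (including at `u = 0`), with
derivative `φ′(u) = sign(u)·(1/(ε + |u|) − 1/ε)` (where `sign 0 = 0`, so that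
in particular `φ′(0) = 0`). -/
theorem scalar_log_penalty_smooth (ε : ℝ) (hε : 0 < ε) :
    (∀ u : ℝ,
        HasDerivAt (fun u : ℝ => Real.log (ε + |u|) - |u| / ε)
          (Real.sign u * (1 / (ε + |u|) - 1 / ε)) u) ∧
      Continuous (fun u : ℝ => Real.sign u * (1 / (ε + |u|) - 1 / ε)) := by
  have hden : ∀ u : ℝ, 0 < ε + |u| := fun u => by positivity
  have key : ∀ u : ℝ, Real.sign u * (1 / (ε + |u|) - 1 / ε) = -u / (ε * (ε + |u|)) := by
    intro u
    have h1 := hden u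
    have h2 : Real.sign u * |u| = u := by
      rcases lt_trichotomy u 0 with h | h | h
      · rw [Real.sign_of_neg h, abs_of_neg h]; ring
      · simp [h]
      · rw [Real.sign_of_pos h, abs_of_pos h]; ring
    have h3 : 1 / (ε + |u|) - 1 / ε = -|u| / (ε * (ε + |u|)) := by
      field_simp
      ring
    rw [h3, mul_div_assoc', mul_neg, h2]
  constructor
  · intro u
    rcases lt_trichotomy u 0 with h | h | h
    · -- u < 0 : locally φ u = log (ε - u) + u/ε
      have hd : HasDerivAt (fun v : ℝ => Real.log (ε - v) + v / ε)
          (Real.sign u * (1 / (ε + |u|) - 1 / ε)) u := by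
        have hne : ε - u ≠ 0 := by nlinarith
        have h1 : HasDerivAt (fun v : ℝ => ε - v) (-1) u := by
          exact (hasDerivAt_id u).const_sub ε
        have h2 : HasDerivAt (fun v : ℝ => Real.log (ε - v)) (-1 / (ε - u)) u := h1.log hne
        have h3 : HasDerivAt (fun v : ℝ => v / ε) (1 / ε) u := by
          simpa using (hasDerivAt_id u).div_const ε
        have := h2.add h3
        convert this using 1
        case e'_4 => rfl
        case e'_5 => rfl
        case e'_8 => rfl
        have hm1 : ε * (ε + -u) ≠ 0 := by
          apply mul_ne_zero hε.ne'
          nlinarith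
        rw [key u, abs_of_neg h, div_add_div _ _ hne hε.ne',
          div_eq_div_iff hm1 (mul_ne_zero hne hε.ne')]
        ring
      apply hd.congr_of_eventuallyEq
      filter_upwards [eventually_lt_nhds h] with v hv
      rw [abs_of_neg hv]; ring
    · -- u = 0
      subst h
      have hg : HasDerivAt (fun t : ℝ => Real.log (ε + t) - t / ε) 0 0 := by
        have h1 : HasDerivAt (fun t : ℝ => ε + t) 1 0 := by
          simpa using (hasDerivAt_id (0:ℝ)).const_add ε
        have h2 : HasDerivAt (fun t : ℝ => Real.log (ε + t)) (1 / (ε + 0)) 0 :=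
          h1.log (by positivity)
        have h3 : HasDerivAt (fun t : ℝ => t / ε) (1 / ε) 0 := by
          simpa using (hasDerivAt_id (0:ℝ)).div_const ε
        have := h2.sub h3
        convert this using 1
        case e'_4 => rfl
        case e'_5 => rfl
        case e'_8 => rfl
        simp
      rw [hasDerivAt_iff_tendsto] at hg ⊢
      have habs : Filter.Tendsto (fun u : ℝ => |u|) (nhds 0) (nhds 0) := by
        simpa using continuous_abs.tendsto (0 : ℝ)
      have := hg.comp habs
      convert this using 2 with v
      simp [Function.comp, Real.sign_zero, abs_abs]
    · -- u > 0
      have hd : HasDerivAt (fun v : ℝ => Real.log (ε + v) - v / ε)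
          (Real.sign u * (1 / (ε + |u|) - 1 / ε)) u := by
        have hne : ε + u ≠ 0 := by nlinarith
        have h1 : HasDerivAt (fun v : ℝ => ε + v) 1 u := by
          simpa using (hasDerivAt_id u).const_add ε
        have h2 : HasDerivAt (fun v : ℝ => Real.log (ε + v)) (1 / (ε + u)) u := h1.log hne
        have h3 : HasDerivAt (fun v : ℝ => v / ε) (1 / ε) u := by
          simpa using (hasDerivAt_id u).div_const ε
        have := h2.sub h3
        convert this using 1
        case e'_4 => rfl
        case e'_5 => rfl
        case e'_8 => rfl
        have hm1 : ε * (ε + u) ≠ 0 := mul_ne_zero hε.ne' hne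
        rw [key u, abs_of_pos h, div_sub_div _ _ hne hε.ne',
          div_eq_div_iff hm1 (mul_ne_zero hne hε.ne')]
        ring
      apply hd.congr_of_eventuallyEq
      filter_upwards [eventually_gt_nhds h] with v hv
      rw [abs_of_pos hv]
  · have : (fun u : ℝ => Real.sign u * (1 / (ε + |u|) - 1 / ε))
        = fun u : ℝ => -u / (ε * (ε + |u|)) := funext key
    rw [this]
    exact continuous_neg.div (continuous_const.mul (continuous_const.add continuous_abs))
      fun u => by positivity
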